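/- Theorem A (pointwise sparse domination linear in complexity): let α be a Carleson sequence on a dyadic cube P₀ and m ≥ 0. For every k-tuple of nonnegative integrable functions f₁,…,f_k on P₀ there exists a sparse collection 𝒮 ⊆ 𝒟(P₀) such that 𝒜^m_{P₀,α} f⃗(x) ≤ C₂ (m+1) ‖α‖_{Car(P₀)} Σ_{Q∈𝒮} (∏_{i=1}^k ⟨f_i⟩_Q) 1_Q(x) for all x ∈ P₀, with C₂ depending only on k and d. -/

import Mathlib

open MeasureTheory ENNReal Set
noncomputable section

/-- A dyadic cube in `ℝ^d`: generation `gen` (side length `2^{-gen}`) and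
position `pos` (lower-left corner `pos * 2^{-gen}`). -/
structure DyadicCube (d : ℕ) where
  gen : ℤ
  pos : Fin d → ℤ

namespace DyadicCube
variable {d : ℕ}

/-- The half-open cube represented by `Q`. -/
def toSet (Q : DyadicCube d) : Set (Fin d → ℝ) :=
  {x | ∀ i, (Q.pos i : ℝ) * (2 : ℝ) ^ (-Q.gen) ≤ x i ∧
        x i < ((Q.pos i : ℝ) + 1) * (2 : ℝ) ^ (-Q.gen)}

/-- Lebesgue measure of the cube. -/
def vol (Q : DyadicCube d) : ℝ≥0∞ := volume Q.toSet

/-- The dyadic parent of a cube. -/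
def parent (Q : DyadicCube d) : DyadicCube d :=
  ⟨Q.gen - 1, fun i => Int.fdiv (Q.pos i) 2⟩

/-- The `m`-th dyadic ancestor of a cube. -/
def ancestor (m : ℕ) (Q : DyadicCube d) : DyadicCube d := parent^[m] Q

/-- `Q.In P`: `Q` is a dyadic subcube of `P`. -/
def In (Q P : DyadicCube d) : Prop := P.gen ≤ Q.gen ∧ Q.toSet ⊆ P.toSet

/-- Average of a nonnegative (extended-real-valued) function over a cube. -/
def avg (Q : DyadicCube d) (f : (Fin d → ℝ) → ℝ≥0∞) : ℝ≥0∞ :=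
  (∫⁻ x in Q.toSet, f x) / Q.vol

/-- Average of a real-valued function over a cube. -/
def avgR (Q : DyadicCube d) (f : (Fin d → ℝ) → ℝ) : ℝ :=
  (∫ x in Q.toSet, f x) / (Q.vol).toReal

/-- `α` is a Carleson sequence on `𝒟(P₀)` with constant `C`. -/
def Carleson (P₀ : DyadicCube d) (α : DyadicCube d → ℝ≥0∞) (C : ℝ≥0∞) : Prop :=
  ∀ P : DyadicCube d, P.In P₀ →
    ∑' Q : {Q : DyadicCube d // Q.In P}, α Q.1 * Q.1.vol ≤ C * P.vol

/-- Real-valued version of the Carleson condition. -/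
def CarlesonR (P₀ : DyadicCube d) (α : DyadicCube d → ℝ) (C : ℝ) : Prop :=
  ∀ P : DyadicCube d, P.In P₀ →
    ∑' Q : {Q : DyadicCube d // Q.In P}, α Q.1 * (Q.1.vol).toReal ≤ C * (P.vol).toReal

/-- `η`-sparse collection of dyadic cubes. -/
def Sparse (η : ℝ≥0∞) (S : Set (DyadicCube d)) : Prop :=
  ∃ E : DyadicCube d → Set (Fin d → ℝ),
    (∀ Q ∈ S, MeasurableSet (E Q) ∧ E Q ⊆ Q.toSet ∧ η * Q.vol ≤ volume (E Q)) ∧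
    S.Pairwise fun Q Q' => Disjoint (E Q) (E Q')

/-- The `k`-linear positive dyadic shift of complexity `m` on `𝒟(P₀)`. -/
def shift (P₀ : DyadicCube d) (α : DyadicCube d → ℝ≥0∞) (m : ℕ) {k : ℕ}
    (f : Fin k → (Fin d → ℝ) → ℝ≥0∞) (x : Fin d → ℝ) : ℝ≥0∞ :=
  ∑' Q : {Q : DyadicCube d // Q.In P₀ ∧ P₀.gen + m ≤ Q.gen},
    α Q.1 * (∏ i, (ancestor m Q.1).avg (f i)) * Q.1.toSet.indicator 1 x

/-- The sliced shift `𝒜^{m;0}_{P,α}`, summing only over generations `jm`, `j ≥ 1`,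
relative to `P`. -/
def slicedShift (P : DyadicCube d) (α : DyadicCube d → ℝ≥0∞) (m : ℕ) {k : ℕ}
    (f : Fin k → (Fin d → ℝ) → ℝ≥0∞) (x : Fin d → ℝ) : ℝ≥0∞ :=
  ∑' Q : {Q : DyadicCube d // Q.In P ∧ ∃ j : ℕ, 1 ≤ j ∧ Q.gen = P.gen + j * m},
    α Q.1 * (∏ i, (ancestor m Q.1).avg (f i)) * Q.1.toSet.indicator 1 x

/-- Real-valued `k`-linear positive dyadic shift of complexity `m`. -/
def shiftR (P₀ : DyadicCube d) (α : DyadicCube d → ℝ) (m : ℕ) {k : ℕ}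
    (f : Fin k → (Fin d → ℝ) → ℝ) (x : Fin d → ℝ) : ℝ :=
  ∑' Q : {Q : DyadicCube d // Q.In P₀ ∧ P₀.gen + m ≤ Q.gen},
    α Q.1 * (∏ i, (ancestor m Q.1).avgR (f i)) * Q.1.toSet.indicator 1 x

/-- Real-valued sliced shift `𝒜^{m;0}_{P,α}`. -/
def slicedShiftR (P : DyadicCube d) (α : DyadicCube d → ℝ) (m : ℕ) {k : ℕ}
    (f : Fin k → (Fin d → ℝ) → ℝ) (x : Fin d → ℝ) : ℝ :=
  ∑' Q : {Q : DyadicCube d // Q.In P ∧ ∃ j : ℕ, 1 ≤ j ∧ Q.gen = P.gen + j * m},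
    α Q.1 * (∏ i, (ancestor m Q.1).avgR (f i)) * Q.1.toSet.indicator 1 x

/-- The positive sparse operator `𝒜⁰_𝒮`. -/
def sparseOp (S : Set (DyadicCube d)) {k : ℕ}
    (f : Fin k → (Fin d → ℝ) → ℝ≥0∞) (x : Fin d → ℝ) : ℝ≥0∞ :=
  ∑' Q : S, (∏ i, (Q : DyadicCube d).avg (f i)) * (Q : DyadicCube d).toSet.indicator 1 x

end DyadicCube

open DyadicCube


namespace SparseProof
open DyadicCube

variable {d : ℕ}

lemma toSet_eq (Q : DyadicCube d) :
    Q.toSet = Set.univ.pi fun i => Set.Ico ((Q.pos i : ℝ) * (2:ℝ)^(-Q.gen))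
      (((Q.pos i : ℝ)+1) * (2:ℝ)^(-Q.gen)) := by
  ext x; simp [DyadicCube.toSet, Set.mem_pi, Set.mem_Ico]

lemma measurableSet_toSet (Q : DyadicCube d) : MeasurableSet Q.toSet := by
  rw [toSet_eq]; exact MeasurableSet.univ_pi fun i => measurableSet_Ico

lemma hpow_pos (g : ℤ) : (0:ℝ) < (2:ℝ)^(-g) := by positivity

lemma vol_eq (Q : DyadicCube d) :
    Q.vol = (ENNReal.ofReal ((2:ℝ)^(-Q.gen)))^d := by
  rw [DyadicCube.vol, toSet_eq, volume_pi_pi]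
  have h : ∀ i : Fin d, volume (Set.Ico ((Q.pos i : ℝ) * (2:ℝ)^(-Q.gen))
      (((Q.pos i : ℝ)+1) * (2:ℝ)^(-Q.gen))) = ENNReal.ofReal ((2:ℝ)^(-Q.gen)) := by
    intro i
    rw [Real.volume_Ico]
    congr 1
    ring
  exact (Finset.prod_congr rfl fun i _ => h i).trans (by simp)

lemma vol_pos (Q : DyadicCube d) : 0 < Q.vol := by
  rw [vol_eq]
  exact ENNReal.pow_pos (ENNReal.ofReal_pos.2 (hpow_pos _)) _

lemma vol_ne_top (Q : DyadicCube d) : Q.vol ≠ ⊤ := by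
  rw [vol_eq]
  exact ENNReal.pow_ne_top ENNReal.ofReal_lt_top.ne

lemma vol_ne_zero (Q : DyadicCube d) : Q.vol ≠ 0 := (vol_pos Q).ne'

lemma corner_mem (Q : DyadicCube d) : (fun i => (Q.pos i : ℝ) * (2:ℝ)^(-Q.gen)) ∈ Q.toSet := by
  intro i
  refine ⟨le_rfl, ?_⟩
  show (Q.pos i : ℝ) * (2:ℝ)^(-Q.gen) < ((Q.pos i : ℝ) + 1) * (2:ℝ)^(-Q.gen)
  have := hpow_pos Q.gen
  nlinarith

lemma nonempty_toSet (Q : DyadicCube d) : Q.toSet.Nonempty := ⟨_, corner_mem Q⟩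

/-- Key dyadic comparability: if the cubes intersect and `P` is coarser, `Q ⊆ P`. -/
lemma subset_of_inter (P Q : DyadicCube d) (hg : P.gen ≤ Q.gen)
    (hx : (Q.toSet ∩ P.toSet).Nonempty) : Q.toSet ⊆ P.toSet := by
  obtain ⟨y, hyQ, hyP⟩ := hx
  set n : ℕ := (Q.gen - P.gen).toNat with hn
  have hg' : (n : ℤ) = Q.gen - P.gen := Int.toNat_of_nonneg (by omega)
  have hQpos := hpow_pos Q.gen
  have hPh : (2:ℝ)^(-P.gen) = (2:ℝ)^n * (2:ℝ)^(-Q.gen) := by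
    rw [← zpow_natCast (2:ℝ) n, ← zpow_add₀ (by norm_num : (2:ℝ) ≠ 0)]
    congr 1
    omega
  intro x hxQ i
  have h1 : (P.pos i : ℝ) * (2:ℝ)^(-P.gen) ≤ y i := (hyP i).1
  have h2 : y i < ((P.pos i : ℝ)+1) * (2:ℝ)^(-P.gen) := (hyP i).2
  have h3 : (Q.pos i : ℝ) * (2:ℝ)^(-Q.gen) ≤ y i := (hyQ i).1
  have h4 : y i < ((Q.pos i : ℝ)+1) * (2:ℝ)^(-Q.gen) := (hyQ i).2
  -- integer inequalities
  have key1 : (P.pos i : ℝ) * (2:ℝ)^n ≤ (Q.pos i : ℝ) := by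
    have : (P.pos i : ℝ) * ((2:ℝ)^n * (2:ℝ)^(-Q.gen)) < ((Q.pos i : ℝ)+1) * (2:ℝ)^(-Q.gen) := by
      rw [← hPh]; linarith
    have h5 : (P.pos i : ℝ) * (2:ℝ)^n < (Q.pos i : ℝ) + 1 := by
      have := (mul_lt_mul_iff_left₀ hQpos).1 (by linarith [this] : ((P.pos i : ℝ) * (2:ℝ)^n) * (2:ℝ)^(-Q.gen) < ((Q.pos i : ℝ)+1) * (2:ℝ)^(-Q.gen))
      exact this
    have h6 : (P.pos i) * (2:ℤ)^n < Q.pos i + 1 := by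
      exact_mod_cast (by push_cast; linarith : ((P.pos i * (2:ℤ)^n : ℤ) : ℝ) < ((Q.pos i + 1 : ℤ) : ℝ))
    exact_mod_cast (by omega : (P.pos i) * (2:ℤ)^n ≤ Q.pos i)
  have key2 : (Q.pos i : ℝ) + 1 ≤ ((P.pos i : ℝ) + 1) * (2:ℝ)^n := by
    have : (Q.pos i : ℝ) * (2:ℝ)^(-Q.gen) < ((P.pos i : ℝ)+1) * ((2:ℝ)^n * (2:ℝ)^(-Q.gen)) := by
      rw [← hPh]; linarith
    have h5 : (Q.pos i : ℝ) < ((P.pos i : ℝ)+1) * (2:ℝ)^n := by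
      have := (mul_lt_mul_iff_left₀ hQpos).1 (by linarith [this] : (Q.pos i : ℝ) * (2:ℝ)^(-Q.gen) < (((P.pos i : ℝ)+1) * (2:ℝ)^n) * (2:ℝ)^(-Q.gen))
      exact this
    have h6 : Q.pos i < (P.pos i + 1) * (2:ℤ)^n := by
      exact_mod_cast (by push_cast; linarith : ((Q.pos i : ℤ) : ℝ) < (((P.pos i + 1) * (2:ℤ)^n : ℤ) : ℝ))
    exact_mod_cast (by omega : (Q.pos i : ℤ) + 1 ≤ (P.pos i + 1) * (2:ℤ)^n)
  constructor
  · calc (P.pos i : ℝ) * (2:ℝ)^(-P.gen) = ((P.pos i : ℝ) * (2:ℝ)^n) * (2:ℝ)^(-Q.gen) := by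
          rw [hPh]; ring
      _ ≤ (Q.pos i : ℝ) * (2:ℝ)^(-Q.gen) := by
          exact mul_le_mul_of_nonneg_right key1 hQpos.le
      _ ≤ x i := (hxQ i).1
  · calc x i < ((Q.pos i : ℝ)+1) * (2:ℝ)^(-Q.gen) := (hxQ i).2
      _ ≤ (((P.pos i : ℝ)+1) * (2:ℝ)^n) * (2:ℝ)^(-Q.gen) := by
          exact mul_le_mul_of_nonneg_right key2 hQpos.le
      _ = ((P.pos i : ℝ)+1) * (2:ℝ)^(-P.gen) := by rw [hPh]; ring

lemma in_of_inter {P Q : DyadicCube d} (hg : P.gen ≤ Q.gen)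
    (hx : (Q.toSet ∩ P.toSet).Nonempty) : Q.In P :=
  ⟨hg, subset_of_inter P Q hg hx⟩

lemma in_or_in (Q Q' : DyadicCube d) (h : (Q.toSet ∩ Q'.toSet).Nonempty) :
    Q.In Q' ∨ Q'.In Q := by
  rcases le_total Q'.gen Q.gen with hg | hg
  · exact Or.inl (in_of_inter hg h)
  · exact Or.inr (in_of_inter hg (by rwa [Set.inter_comm] at h))

lemma eq_of_gen_eq_of_subset {Q P : DyadicCube d} (hg : Q.gen = P.gen)
    (hs : Q.toSet ⊆ P.toSet) : Q = P := by
  have hc := hs (corner_mem Q)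
  have hpos : ∀ i, Q.pos i = P.pos i := by
    intro i
    have h1 := (hc i).1
    have h2 := (hc i).2
    rw [← hg] at h1 h2
    have hh := hpow_pos Q.gen
    have e1 : (P.pos i : ℝ) ≤ Q.pos i := by
      have := (mul_le_mul_iff_left₀ hh).1 h1; exact this
    have e2 : (Q.pos i : ℝ) < (P.pos i : ℝ) + 1 := by
      have := (mul_lt_mul_iff_left₀ hh).1 h2; exact this
    have : (P.pos i : ℤ) ≤ Q.pos i := by exact_mod_cast e1
    have : (Q.pos i : ℤ) < P.pos i + 1 := by exact_mod_cast e2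
    omega
  cases Q; cases P
  simp only [DyadicCube.mk.injEq]
  exact ⟨hg, funext hpos⟩

lemma _root_.DyadicCube.In.refl (Q : DyadicCube d) : Q.In Q := ⟨le_rfl, subset_rfl⟩

lemma _root_.DyadicCube.In.trans {Q R P : DyadicCube d} (h1 : Q.In R) (h2 : R.In P) : Q.In P :=
  ⟨h2.1.trans h1.1, h1.2.trans h2.2⟩

lemma _root_.DyadicCube.In.antisymm {Q P : DyadicCube d} (h1 : Q.In P) (h2 : P.In Q) : Q = P :=
  eq_of_gen_eq_of_subset (le_antisymm h2.1 h1.1) h1.2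

lemma eq_of_gen_eq_of_inter {Q P : DyadicCube d} (hg : Q.gen = P.gen)
    (h : (Q.toSet ∩ P.toSet).Nonempty) : Q = P :=
  eq_of_gen_eq_of_subset hg (subset_of_inter P Q hg.ge h)

lemma gen_parent (Q : DyadicCube d) : Q.parent.gen = Q.gen - 1 := rfl

lemma subset_parent (Q : DyadicCube d) : Q.toSet ⊆ Q.parent.toSet := by
  intro x hx i
  have hh := hpow_pos Q.gen
  set q : ℤ := (Q.pos i).fdiv 2 with hq
  have hed : (Q.pos i).fdiv 2 = Q.pos i / 2 := Int.fdiv_eq_ediv_of_nonneg _ (by norm_num)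
  have h1 : 2 * q ≤ Q.pos i ∧ Q.pos i < 2 * q + 2 := by
    rw [hq, hed]
    constructor
    · have := Int.mul_ediv_add_emod (Q.pos i) 2
      have := Int.emod_nonneg (Q.pos i) (by norm_num : (2:ℤ) ≠ 0)
      omega
    · have := Int.mul_ediv_add_emod (Q.pos i) 2
      have := Int.emod_lt_of_pos (Q.pos i) (by norm_num : (0:ℤ) < 2)
      omega
  have hP2 : (2:ℝ)^(-(Q.gen - 1)) = 2 * (2:ℝ)^(-Q.gen) := by
    rw [(by ring : -(Q.gen - 1) = 1 + -Q.gen), zpow_add₀ (by norm_num : (2:ℝ) ≠ 0)]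
    norm_num
  have hx1 := (hx i).1
  have hx2 := (hx i).2
  have hr1 : ((2 * q : ℤ) : ℝ) ≤ (Q.pos i : ℝ) := by exact_mod_cast h1.1
  have hr2 : ((Q.pos i : ℝ)) + 1 ≤ ((2 * q : ℤ) : ℝ) + 2 := by
    have h2' : Q.pos i + 1 ≤ 2 * q + 2 := by omega
    exact_mod_cast (by exact_mod_cast h2' : ((Q.pos i + 1 : ℤ) : ℝ) ≤ ((2*q+2 : ℤ) : ℝ))
  constructor
  · show ((Q.parent.pos i : ℤ) : ℝ) * (2:ℝ)^(-Q.parent.gen) ≤ x i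
    have : Q.parent.pos i = q := rfl
    rw [this, gen_parent, hP2]
    push_cast at hr1 ⊢
    nlinarith
  · show x i < ((Q.parent.pos i : ℝ) + 1) * (2:ℝ)^(-Q.parent.gen)
    have : Q.parent.pos i = q := rfl
    rw [this, gen_parent, hP2]
    push_cast at hr2 ⊢
    nlinarith

lemma gen_ancestor (m : ℕ) (Q : DyadicCube d) : (ancestor m Q).gen = Q.gen - m := by
  induction m with
  | zero => simp [DyadicCube.ancestor]
  | succ n ih =>
    have : ancestor (n+1) Q = (ancestor n Q).parent := by
      simp [DyadicCube.ancestor, Function.iterate_succ_apply']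
    rw [this, gen_parent, ih]
    push_cast
    ring

lemma subset_ancestor (m : ℕ) (Q : DyadicCube d) : Q.toSet ⊆ (ancestor m Q).toSet := by
  induction m with
  | zero => simp [DyadicCube.ancestor]
  | succ n ih =>
    have : ancestor (n+1) Q = (ancestor n Q).parent := by
      simp [DyadicCube.ancestor, Function.iterate_succ_apply']
    rw [this]
    exact ih.trans (subset_parent _)


instance : Countable (DyadicCube d) := by
  have hinj : Function.Injective (fun Q : DyadicCube d => (Q.gen, Q.pos)) := by
    intro a b h
    cases a; cases b
    simpa [DyadicCube.mk.injEq, Prod.ext_iff] using h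
  exact hinj.countable

lemma in_ancestor (m : ℕ) (Q : DyadicCube d) : Q.In (ancestor m Q) :=
  ⟨by rw [gen_ancestor]; omega, subset_ancestor m Q⟩

lemma ancestor_in {P₀ Q : DyadicCube d} (m : ℕ) (h : Q.In P₀)
    (hg : P₀.gen + m ≤ Q.gen) : (ancestor m Q).In P₀ := by
  have hg' : P₀.gen ≤ (ancestor m Q).gen := by rw [gen_ancestor]; omega
  refine in_of_inter hg' ?_
  obtain ⟨y, hy⟩ := nonempty_toSet Q
  exact ⟨y, subset_ancestor m Q hy, h.2 hy⟩

lemma chain_of_mem {Q Q' : DyadicCube d} {x : Fin d → ℝ}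
    (h : x ∈ Q.toSet) (h' : x ∈ Q'.toSet) : Q.In Q' ∨ Q'.In Q :=
  in_or_in Q Q' ⟨x, h, h'⟩

lemma eq_of_gen_eq_of_mem {Q Q' : DyadicCube d} {x : Fin d → ℝ}
    (h : x ∈ Q.toSet) (h' : x ∈ Q'.toSet) (hg : Q.gen = Q'.gen) : Q = Q' :=
  eq_of_gen_eq_of_inter hg ⟨x, h, h'⟩

lemma lintegral_eq_avg_mul (Q : DyadicCube d) (f : (Fin d → ℝ) → ℝ≥0∞) :
    ∫⁻ x in Q.toSet, f x = Q.avg f * Q.vol :=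
  (ENNReal.div_mul_cancel (vol_ne_zero Q) (vol_ne_top Q)).symm

lemma avg_lt_top {P₀ : DyadicCube d} {f : (Fin d → ℝ) → ℝ≥0∞}
    (hf : ∫⁻ x in P₀.toSet, f x < ⊤) {Q : DyadicCube d} (h : Q.In P₀) :
    Q.avg f < ⊤ := by
  have hle : ∫⁻ x in Q.toSet, f x < ⊤ :=
    lt_of_le_of_lt (lintegral_mono_set h.2) hf
  exact ENNReal.div_lt_top hle.ne (vol_ne_zero Q)

lemma avg_eq_zero_iff (Q : DyadicCube d) (f : (Fin d → ℝ) → ℝ≥0∞) :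
    Q.avg f = 0 ↔ ∫⁻ x in Q.toSet, f x = 0 := by
  rw [DyadicCube.avg, ENNReal.div_eq_zero_iff]
  simp [vol_ne_top Q]

/-- Sum of integrals over a pairwise-disjoint family of cubes inside `R`. -/
lemma tsum_lintegral_le {B : Set (DyadicCube d)} (R : DyadicCube d)
    (hsub : ∀ Q ∈ B, Q.toSet ⊆ R.toSet)
    (hdisj : B.Pairwise fun Q Q' => Disjoint Q.toSet Q'.toSet)
    (g : (Fin d → ℝ) → ℝ≥0∞) :
    ∑' Q : B, ∫⁻ x in (Q : DyadicCube d).toSet, g x ≤ ∫⁻ x in R.toSet, g x := by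
  have hmeas : ∀ Q : B, MeasurableSet (Q : DyadicCube d).toSet :=
    fun Q => measurableSet_toSet _
  have hd : Pairwise fun (Q Q' : B) => Disjoint (Q : DyadicCube d).toSet (Q' : DyadicCube d).toSet := by
    intro Q Q' hne
    exact hdisj Q.2 Q'.2 (fun h => hne (Subtype.ext h))
  rw [← MeasureTheory.lintegral_iUnion hmeas hd g]
  exact lintegral_mono_set (by simpa using fun (Q : B) => hsub Q Q.2)

lemma tsum_vol_le {B : Set (DyadicCube d)} (R : DyadicCube d)
    (hsub : ∀ Q ∈ B, Q.toSet ⊆ R.toSet)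
    (hdisj : B.Pairwise fun Q Q' => Disjoint Q.toSet Q'.toSet) :
    ∑' Q : B, (Q : DyadicCube d).vol ≤ R.vol := by
  have := tsum_lintegral_le R hsub hdisj (fun _ => 1)
  simpa [DyadicCube.vol, MeasureTheory.setLIntegral_one] using this

lemma alpha_le {P₀ : DyadicCube d} {α : DyadicCube d → ℝ≥0∞} {A : ℝ≥0∞}
    (hC : Carleson P₀ α A) {Q : DyadicCube d} (h : Q.In P₀) : α Q ≤ A := by
  have h1 : α Q * Q.vol ≤ A * Q.vol :=
    le_trans (ENNReal.le_tsum (⟨Q, DyadicCube.In.refl Q⟩ : {R : DyadicCube d // R.In Q})) (hC Q h)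
  exact (ENNReal.mul_le_mul_iff_left (vol_ne_zero Q) (vol_ne_top Q)).1 h1


section Stopping

variable {k : ℕ}

/-- Sum of `α` over the cubes between `Q` and `P`. -/
def chainSum (α : DyadicCube d → ℝ≥0∞) (P Q : DyadicCube d) : ℝ≥0∞ :=
  ∑' R : {R : DyadicCube d // Q.In R ∧ R.In P}, α R.1

/-- The stopping condition for `Q` relative to `P`. -/
def Bad (α : DyadicCube d → ℝ≥0∞) (A : ℝ≥0∞) (f : Fin k → (Fin d → ℝ) → ℝ≥0∞)
    (P Q : DyadicCube d) : Prop :=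
  Q.In P ∧ Q ≠ P ∧
    ((∃ i, (4 * k : ℝ≥0∞) * P.avg (f i) < Q.avg (f i)) ∨ 4 * A < chainSum α P Q)

def MaxBad (α : DyadicCube d → ℝ≥0∞) (A : ℝ≥0∞) (f : Fin k → (Fin d → ℝ) → ℝ≥0∞)
    (P Q : DyadicCube d) : Prop :=
  Bad α A f P Q ∧ ∀ R, Bad α A f P R → Q.In R → R = Q

/-- The stopping family. -/
inductive Stop (P₀ : DyadicCube d) (α : DyadicCube d → ℝ≥0∞) (A : ℝ≥0∞)
    (f : Fin k → (Fin d → ℝ) → ℝ≥0∞) : DyadicCube d → Prop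
  | base : Stop P₀ α A f P₀
  | child {P Q : DyadicCube d} : Stop P₀ α A f P → MaxBad α A f P Q → Stop P₀ α A f Q

variable {P₀ : DyadicCube d} {α : DyadicCube d → ℝ≥0∞} {A : ℝ≥0∞}
  {f : Fin k → (Fin d → ℝ) → ℝ≥0∞}

lemma Bad.gen_lt {P Q : DyadicCube d} (h : Bad α A f P Q) : P.gen < Q.gen := by
  rcases lt_or_eq_of_le h.1.1 with h' | h'
  · exact h'
  · exact absurd (eq_of_gen_eq_of_subset h'.symm h.1.2) h.2.1

lemma exists_maxBad_above {P Q : DyadicCube d} (h : Bad α A f P Q) :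
    ∃ R, MaxBad α A f P R ∧ Q.In R := by
  set T := {n : ℕ | ∃ R, Bad α A f P R ∧ Q.In R ∧ (R.gen - P.gen).toNat = n} with hT
  have hne : T.Nonempty := ⟨(Q.gen - P.gen).toNat, Q, h, DyadicCube.In.refl Q, rfl⟩
  classical
  obtain ⟨R, hR, hQR, hgen⟩ := Nat.sInf_mem hne
  refine ⟨R, ⟨hR, ?_⟩, hQR⟩
  intro R' hR' hRR'
  have hmem : (R'.gen - P.gen).toNat ∈ T := ⟨R', hR', hQR.trans hRR', rfl⟩
  have hle := Nat.sInf_le hmem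
  have h1 : P.gen < R.gen := hR.gen_lt
  have h2 : P.gen < R'.gen := hR'.gen_lt
  have h3 : R'.gen ≤ R.gen := hRR'.1
  have : R.gen = R'.gen := by omega
  exact (eq_of_gen_eq_of_subset this hRR'.2).symm

lemma maxBad_disjoint {P Q Q' : DyadicCube d} (h : MaxBad α A f P Q)
    (h' : MaxBad α A f P Q') (hne : Q ≠ Q') : Disjoint Q.toSet Q'.toSet := by
  by_contra hd
  rw [Set.not_disjoint_iff_nonempty_inter] at hd
  rcases in_or_in Q Q' hd with hin | hin
  · exact hne (h.2 Q' h'.1 hin).symm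
  · exact hne (h'.2 Q h.1 hin)

lemma Stop.in_P₀ {P : DyadicCube d} (h : Stop P₀ α A f P) : P.In P₀ := by
  induction h with
  | base => exact DyadicCube.In.refl P₀
  | child _ hmax ih => exact (hmax.1.1).trans ih

/-- Tree structure: a stopping cube strictly inside another lies inside one of
its stopping children. -/
lemma stop_structure (n : ℕ) : ∀ P' P : DyadicCube d, Stop P₀ α A f P' → Stop P₀ α A f P →
    P'.In P → (P'.gen - P₀.gen).toNat ≤ n →
    P' = P ∨ ∃ C, MaxBad α A f P C ∧ P'.In C := by
  induction n using Nat.strong_induction_on with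
  | _ n ih =>
    intro P' P hP' hP hin hgen
    by_cases heq : P' = P
    · exact Or.inl heq
    right
    cases hP' with
    | base =>
      exact absurd (In.antisymm hin hP.in_P₀).symm (Ne.symm heq)
    | @child Pp P' hPp hmax =>
      have hPpP₀ := hPp.in_P₀
      have hPP₀ := hP.in_P₀
      have hgenlt : Pp.gen < P'.gen := hmax.1.gen_lt
      have hg1 : P₀.gen ≤ Pp.gen := hPpP₀.1
      have hg2 : P₀.gen ≤ P.gen := hPP₀.1
      obtain ⟨y, hy⟩ := nonempty_toSet P'
      rcases in_or_in Pp P ⟨y, hmax.1.1.2 hy, hin.2 hy⟩ with hPpP | hPPp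
      · by_cases hep : Pp = P
        · subst hep; exact ⟨P', hmax, DyadicCube.In.refl P'⟩
        · rcases ih (Pp.gen - P₀.gen).toNat (by omega) Pp P hPp hP hPpP le_rfl with h | ⟨C, hC, hPpC⟩
          · exact absurd h hep
          · exact ⟨C, hC, (hmax.1.1).trans hPpC⟩
      · by_cases hep : P = Pp
        · subst hep; exact ⟨P', hmax, DyadicCube.In.refl P'⟩
        · have hPlt : P.gen < P'.gen := by
            rcases lt_or_eq_of_le hin.1 with h' | h'
            · exact h'
            · exact absurd (eq_of_gen_eq_of_subset h'.symm hin.2) heq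
          rcases ih (P.gen - P₀.gen).toNat (by omega) P Pp hP hPp hPPp le_rfl with h | ⟨C, hC, hPC⟩
          · exact absurd h hep
          · have hCP' : C = P' := hmax.2 C hC.1 (hin.trans hPC)
            exact absurd (In.antisymm hin (hCP' ▸ hPC)) heq

lemma exists_min_stop {Q : DyadicCube d} (h : Q.In P₀) :
    ∃ P, Stop P₀ α A f P ∧ Q.In P ∧ ∀ P', Stop P₀ α A f P' → Q.In P' → P.In P' := by
  set T := {n : ℕ | ∃ R, Stop P₀ α A f R ∧ Q.In R ∧ (Q.gen - R.gen).toNat = n} with hT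
  have hne : T.Nonempty := ⟨(Q.gen - P₀.gen).toNat, P₀, Stop.base, h, rfl⟩
  obtain ⟨R, hR, hQR, hgen⟩ := Nat.sInf_mem hne
  refine ⟨R, hR, hQR, ?_⟩
  intro P' hP' hQP'
  obtain ⟨y, hy⟩ := nonempty_toSet Q
  rcases in_or_in P' R ⟨y, hQP'.2 hy, hQR.2 hy⟩ with hin | hin
  · have hmem : (Q.gen - P'.gen).toNat ∈ T := ⟨P', hP', hQP', rfl⟩
    have hle := Nat.sInf_le hmem
    have h1 : R.gen ≤ Q.gen := hQR.1
    have h2 : P'.gen ≤ Q.gen := hQP'.1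
    have h3 : R.gen ≤ P'.gen := hin.1
    have : P'.gen = R.gen := by omega
    exact (eq_of_gen_eq_of_subset this hin.2) ▸ DyadicCube.In.refl R
  · exact hin

open Classical in
/-- The minimal stopping cube containing `Q`. -/
noncomputable def piStop (P₀ : DyadicCube d) (α : DyadicCube d → ℝ≥0∞) (A : ℝ≥0∞)
    (f : Fin k → (Fin d → ℝ) → ℝ≥0∞) (Q : DyadicCube d) : DyadicCube d :=
  if h : Q.In P₀ then (exists_min_stop (α := α) (A := A) (f := f) h).choose else P₀

lemma piStop_spec {Q : DyadicCube d} (h : Q.In P₀) :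
    Stop P₀ α A f (piStop P₀ α A f Q) ∧ Q.In (piStop P₀ α A f Q) ∧
      ∀ P', Stop P₀ α A f P' → Q.In P' → (piStop P₀ α A f Q).In P' := by
  rw [piStop, dif_pos h]
  exact (exists_min_stop h).choose_spec

lemma piStop_not_bad {Q : DyadicCube d} (h : Q.In P₀) :
    ¬ Bad α A f (piStop P₀ α A f Q) Q := by
  intro hbad
  obtain ⟨R, hmaxR, hQR⟩ := exists_maxBad_above hbad
  have hspec := piStop_spec (α := α) (A := A) (f := f) h
  have hstopR : Stop P₀ α A f R := Stop.child hspec.1 hmaxR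
  have hmin := hspec.2.2 R hstopR hQR
  exact hmaxR.1.2.1 (In.antisymm hmaxR.1.1 hmin)

lemma piStop_eq_self {Q : DyadicCube d} (h : Stop P₀ α A f Q) :
    piStop P₀ α A f Q = Q := by
  have hspec := piStop_spec (α := α) (A := A) (f := f) h.in_P₀
  exact In.antisymm (hspec.2.2 Q h (DyadicCube.In.refl Q)) hspec.2.1

end Stopping


section Sparsity

variable {k : ℕ} {P₀ : DyadicCube d} {α : DyadicCube d → ℝ≥0∞} {A : ℝ≥0∞}
  {f : Fin k → (Fin d → ℝ) → ℝ≥0∞}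

lemma ennreal_k_mul_div (hk : 0 < k) (V : ℝ≥0∞) :
    (k : ℝ≥0∞) * (V / (4 * k)) = V / 4 := by
  have hk0 : (k : ℝ≥0∞) ≠ 0 := Nat.cast_ne_zero.2 hk.ne'
  have hkt : (k : ℝ≥0∞) ≠ ⊤ := ENNReal.natCast_ne_top k
  rw [div_eq_mul_inv, div_eq_mul_inv,
    ENNReal.mul_inv (Or.inl (by norm_num)) (Or.inl (by norm_num))]
  calc (k:ℝ≥0∞) * (V * ((4:ℝ≥0∞)⁻¹ * (k:ℝ≥0∞)⁻¹))
      = V * (4:ℝ≥0∞)⁻¹ * ((k:ℝ≥0∞) * (k:ℝ≥0∞)⁻¹) := by ring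
    _ = V * (4:ℝ≥0∞)⁻¹ := by rw [ENNReal.mul_inv_cancel hk0 hkt, mul_one]

/-- The subfamily of stopping children that are bad via the `i`-th function. -/
lemma tsum_vol_badf_le (hk : 0 < k) (hfin : ∀ i, ∫⁻ x in P₀.toSet, f i x < ⊤)
    {P : DyadicCube d} (hP : P.In P₀) (i : Fin k) :
    ∑' Q : {Q : DyadicCube d // MaxBad α A f P Q ∧
        (4 * k : ℝ≥0∞) * P.avg (f i) < Q.avg (f i)}, (Q : DyadicCube d).vol
      ≤ P.vol / (4 * k) := by
  set B : Set (DyadicCube d) :=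
    {Q | MaxBad α A f P Q ∧ (4 * k : ℝ≥0∞) * P.avg (f i) < Q.avg (f i)} with hB
  have hsub : ∀ Q ∈ B, Q.toSet ⊆ P.toSet := fun Q hQ => hQ.1.1.1.2
  have hdisj : B.Pairwise fun Q Q' => Disjoint Q.toSet Q'.toSet :=
    fun Q hQ Q' hQ' hne => maxBad_disjoint hQ.1 hQ'.1 hne
  set a := P.avg (f i) with ha
  have hat : a < ⊤ := avg_lt_top (hfin i) hP
  by_cases ha0 : a = 0
  · -- B is empty
    haveI : IsEmpty {Q : DyadicCube d // MaxBad α A f P Q ∧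
        (4 * k : ℝ≥0∞) * a < Q.avg (f i)} := by
      refine ⟨?_⟩
      rintro ⟨Q, hQ, hlt⟩
      have h0 : Q.avg (f i) = 0 := by
        rw [avg_eq_zero_iff]
        have h1 : ∫⁻ x in Q.toSet, f i x ≤ ∫⁻ x in P.toSet, f i x :=
          lintegral_mono_set hQ.1.1.2
        have h2 : ∫⁻ x in P.toSet, f i x = 0 := by
          rw [← avg_eq_zero_iff]; exact ha0
        exact le_antisymm (h1.trans h2.le) (zero_le)
      rw [h0, ha0] at hlt
      simp at hlt
    rw [tsum_empty]
    exact zero_le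
  · -- Chebyshev
    have hk4 : (4 * k : ℝ≥0∞) ≠ 0 := by
      simp [hk.ne']
    have hk4t : (4 * k : ℝ≥0∞) ≠ ⊤ := by
      simp [ENNReal.mul_ne_top, ENNReal.natCast_ne_top]
    have key : (4 * k : ℝ≥0∞) * a * (∑' Q : B, (Q : DyadicCube d).vol)
        ≤ a * P.vol := by
      calc (4 * k : ℝ≥0∞) * a * (∑' Q : B, (Q : DyadicCube d).vol)
          = ∑' Q : B, (4 * k : ℝ≥0∞) * a * (Q : DyadicCube d).vol := by
            rw [ENNReal.tsum_mul_left]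
        _ ≤ ∑' Q : B, ∫⁻ x in (Q : DyadicCube d).toSet, f i x := by
            refine ENNReal.tsum_le_tsum fun Q => ?_
            rw [lintegral_eq_avg_mul]
            exact mul_le_mul_left Q.2.2.le _
        _ ≤ ∫⁻ x in P.toSet, f i x := tsum_lintegral_le P hsub hdisj _
        _ = a * P.vol := lintegral_eq_avg_mul P (f i)
    have key2 : (4 * k : ℝ≥0∞) * (∑' Q : B, (Q : DyadicCube d).vol) * a ≤ P.vol * a := by
      calc (4 * k : ℝ≥0∞) * (∑' Q : B, (Q : DyadicCube d).vol) * a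
          = (4 * k : ℝ≥0∞) * a * (∑' Q : B, (Q : DyadicCube d).vol) := by ring
        _ ≤ a * P.vol := key
        _ = P.vol * a := mul_comm _ _
    have key3 : (4 * k : ℝ≥0∞) * (∑' Q : B, (Q : DyadicCube d).vol) ≤ P.vol :=
      (ENNReal.mul_le_mul_iff_left ha0 hat.ne).1 key2
    rw [ENNReal.le_div_iff_mul_le (Or.inl hk4) (Or.inl hk4t), mul_comm]
    exact key3


lemma tsum_vol_bada_le (hC : Carleson P₀ α A) (hA0 : A ≠ 0) (hAt : A ≠ ⊤)
    {P : DyadicCube d} (hP : P.In P₀) :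
    ∑' Q : {Q : DyadicCube d // MaxBad α A f P Q ∧ 4 * A < chainSum α P Q},
      (Q : DyadicCube d).vol ≤ P.vol / 4 := by
  classical
  set B : Set (DyadicCube d) := {Q | MaxBad α A f P Q ∧ 4 * A < chainSum α P Q} with hB
  set w : DyadicCube d → DyadicCube d → ℝ≥0∞ :=
    fun Q R => if Q ∈ B ∧ Q.In R ∧ R.In P then α R * Q.vol else 0 with hw
  have step1 : 4 * A * (∑' Q : B, (Q : DyadicCube d).vol)
      ≤ ∑' Q : DyadicCube d, ∑' R : DyadicCube d, w Q R := by
    rw [← ENNReal.tsum_mul_left, tsum_subtype B (fun Q => 4 * A * Q.vol)]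
    refine ENNReal.tsum_le_tsum fun Q => ?_
    by_cases hQB : Q ∈ B
    · rw [Set.indicator_of_mem hQB]
      have h1 : 4 * A * Q.vol ≤ chainSum α P Q * Q.vol :=
        mul_le_mul_left hQB.2.le _
      have h2 : chainSum α P Q * Q.vol
          = ∑' R : {R : DyadicCube d // Q.In R ∧ R.In P}, α R.1 * Q.vol := by
        rw [chainSum, ← ENNReal.tsum_mul_right]
      have h3 : ∑' R : {R : DyadicCube d // Q.In R ∧ R.In P}, α R.1 * Q.vol
          = ∑' R : DyadicCube d, w Q R := by
        refine Eq.trans (tsum_subtype {R : DyadicCube d | Q.In R ∧ R.In P}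
          (fun R => α R * Q.vol)) (tsum_congr fun R => ?_)
        simp only [Set.indicator_apply, Set.mem_setOf_eq, hw, hQB, true_and]
      rw [← h3, ← h2]
      exact h1
    · rw [Set.indicator_of_notMem hQB]
      exact zero_le
  have step2 : ∑' Q : DyadicCube d, ∑' R : DyadicCube d, w Q R
      = ∑' R : DyadicCube d, ∑' Q : DyadicCube d, w Q R := ENNReal.tsum_comm
  have step3 : ∀ R : DyadicCube d,
      (∑' Q : DyadicCube d, w Q R) ≤ (if R.In P then α R * R.vol else 0) := by
    intro R
    by_cases hR : R.In P
    · rw [if_pos hR]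
      set BR : Set (DyadicCube d) := {Q | Q ∈ B ∧ Q.In R} with hBR
      have he : ∀ Q, w Q R = Set.indicator BR (fun Q => α R * Q.vol) Q := by
        intro Q
        simp only [hw, Set.indicator_apply, hBR, Set.mem_setOf_eq, hR, and_true]
      calc ∑' Q : DyadicCube d, w Q R
          = ∑' Q : DyadicCube d, Set.indicator BR (fun Q => α R * Q.vol) Q :=
            tsum_congr he
        _ = ∑' Q : BR, α R * (Q : DyadicCube d).vol :=
            (tsum_subtype BR (fun Q => α R * Q.vol)).symm
        _ = α R * ∑' Q : BR, (Q : DyadicCube d).vol := ENNReal.tsum_mul_left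
        _ ≤ α R * R.vol := by
            refine mul_le_mul_right (tsum_vol_le R ?_ ?_) _
            · exact fun Q hQ => hQ.2.2
            · exact fun Q hQ Q' hQ' hne => maxBad_disjoint hQ.1.1 hQ'.1.1 hne
    · rw [if_neg hR]
      have : ∀ Q, w Q R = 0 := by
        intro Q
        simp only [hw, hR, and_false, if_false]
      simp [this]
  have step4 : ∑' R : DyadicCube d, (if R.In P then α R * R.vol else 0)
      ≤ A * P.vol := by
    have he : ∑' R : {R : DyadicCube d // R.In P}, α R.1 * R.1.vol
        = ∑' R : DyadicCube d, (if R.In P then α R * R.vol else 0) := by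
      refine Eq.trans (tsum_subtype {R : DyadicCube d | R.In P}
        (fun R => α R * R.vol)) (tsum_congr fun R => ?_)
      simp [Set.indicator_apply]
    rw [← he]
    exact hC P hP
  have key : A * (4 * (∑' Q : B, (Q : DyadicCube d).vol)) ≤ A * P.vol := by
    calc A * (4 * (∑' Q : B, (Q : DyadicCube d).vol))
        = 4 * A * (∑' Q : B, (Q : DyadicCube d).vol) := by ring
      _ ≤ ∑' Q : DyadicCube d, ∑' R : DyadicCube d, w Q R := step1
      _ = ∑' R : DyadicCube d, ∑' Q : DyadicCube d, w Q R := step2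
      _ ≤ ∑' R : DyadicCube d, (if R.In P then α R * R.vol else 0) :=
          ENNReal.tsum_le_tsum step3
      _ ≤ A * P.vol := step4
  have key2 : 4 * (∑' Q : B, (Q : DyadicCube d).vol) ≤ P.vol :=
    (ENNReal.mul_le_mul_iff_right hA0 hAt).1 key
  rw [ENNReal.le_div_iff_mul_le (Or.inl (by norm_num)) (Or.inl (by norm_num)), mul_comm]
  exact key2


lemma quarter_add_quarter (V : ℝ≥0∞) : V / 4 + V / 4 = V / 2 := by
  have h : V / 4 = (V / 2) / 2 := by
    rw [div_eq_mul_inv, div_eq_mul_inv, div_eq_mul_inv, mul_assoc,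
      ← ENNReal.mul_inv (Or.inl (by norm_num)) (Or.inl (by norm_num))]
    norm_num
  rw [h, ENNReal.add_halves]

lemma children_tsum_vol_le (hk : 0 < k) (hC : Carleson P₀ α A) (hA0 : A ≠ 0)
    (hAt : A ≠ ⊤) (hfin : ∀ i, ∫⁻ x in P₀.toSet, f i x < ⊤)
    {P : DyadicCube d} (hP : P.In P₀) :
    ∑' Q : {Q : DyadicCube d // MaxBad α A f P Q}, (Q : DyadicCube d).vol
      ≤ P.vol / 2 := by
  classical
  set MB : Set (DyadicCube d) := {Q | MaxBad α A f P Q} with hMB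
  set Bi : Fin k → Set (DyadicCube d) := fun i =>
    {Q | MaxBad α A f P Q ∧ (4 * k : ℝ≥0∞) * P.avg (f i) < Q.avg (f i)} with hBi
  set Ba : Set (DyadicCube d) :=
    {Q | MaxBad α A f P Q ∧ 4 * A < chainSum α P Q} with hBa
  have main : ∑' Q : MB, (Q : DyadicCube d).vol
      ≤ (∑ i : Fin k, ∑' Q : Bi i, (Q : DyadicCube d).vol)
        + ∑' Q : Ba, (Q : DyadicCube d).vol := by
    have hpt : ∀ Q, MB.indicator DyadicCube.vol Q
        ≤ (∑ i : Fin k, (Bi i).indicator DyadicCube.vol Q)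
          + Ba.indicator DyadicCube.vol Q := by
      intro Q
      by_cases hQ : Q ∈ MB
      · rw [Set.indicator_of_mem hQ]
        rcases hQ.1.2.2 with ⟨i, hi⟩ | hα
        · refine le_trans ?_ le_self_add
          calc Q.vol = (Bi i).indicator DyadicCube.vol Q :=
                (Set.indicator_of_mem (show Q ∈ Bi i from ⟨hQ, hi⟩)
                  DyadicCube.vol).symm
            _ ≤ ∑ i : Fin k, (Bi i).indicator DyadicCube.vol Q :=
                Finset.single_le_sum
                  (f := fun j : Fin k => (Bi j).indicator DyadicCube.vol Q)
                  (fun _ _ => zero_le) (Finset.mem_univ i)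
        · refine le_trans ?_ le_add_self
          exact (Set.indicator_of_mem (show Q ∈ Ba from ⟨hQ, hα⟩)
            DyadicCube.vol).symm.le
      · rw [Set.indicator_of_notMem hQ]
        exact zero_le
    calc ∑' Q : MB, (Q : DyadicCube d).vol
        = ∑' Q : DyadicCube d, MB.indicator DyadicCube.vol Q :=
          tsum_subtype MB DyadicCube.vol
      _ ≤ ∑' Q : DyadicCube d, ((∑ i : Fin k, (Bi i).indicator DyadicCube.vol Q)
            + Ba.indicator DyadicCube.vol Q) := ENNReal.tsum_le_tsum hpt
      _ = (∑' Q : DyadicCube d, ∑ i : Fin k, (Bi i).indicator DyadicCube.vol Q)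
            + ∑' Q : DyadicCube d, Ba.indicator DyadicCube.vol Q :=
          ENNReal.tsum_add
      _ = (∑ i : Fin k, ∑' Q : DyadicCube d, (Bi i).indicator DyadicCube.vol Q)
            + ∑' Q : DyadicCube d, Ba.indicator DyadicCube.vol Q := by
          rw [Summable.tsum_finsetSum fun i _ => ENNReal.summable]
      _ = (∑ i : Fin k, ∑' Q : Bi i, (Q : DyadicCube d).vol)
            + ∑' Q : Ba, (Q : DyadicCube d).vol := by
          rw [tsum_subtype Ba DyadicCube.vol]
          congr 1
          exact Finset.sum_congr rfl fun i _ => (tsum_subtype (Bi i) DyadicCube.vol).symm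
  calc ∑' Q : MB, (Q : DyadicCube d).vol
      ≤ (∑ i : Fin k, ∑' Q : Bi i, (Q : DyadicCube d).vol)
        + ∑' Q : Ba, (Q : DyadicCube d).vol := main
    _ ≤ (∑ i : Fin k, P.vol / (4 * k)) + P.vol / 4 := by
        refine add_le_add (Finset.sum_le_sum fun i _ => ?_) (tsum_vol_bada_le hC hA0 hAt hP)
        exact tsum_vol_badf_le hk hfin hP i
    _ = (k : ℝ≥0∞) * (P.vol / (4 * k)) + P.vol / 4 := by
        rw [Finset.sum_const, Finset.card_univ, Fintype.card_fin, nsmul_eq_mul]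
    _ = P.vol / 4 + P.vol / 4 := by rw [ennreal_k_mul_div hk]
    _ = P.vol / 2 := quarter_add_quarter P.vol

/-- The exceptional set of a stopping cube. -/
def stopE (α : DyadicCube d → ℝ≥0∞) (A : ℝ≥0∞) (f : Fin k → (Fin d → ℝ) → ℝ≥0∞)
    (P : DyadicCube d) : Set (Fin d → ℝ) :=
  P.toSet \ ⋃ Q : {Q : DyadicCube d // MaxBad α A f P Q}, (Q : DyadicCube d).toSet

lemma stopE_vol (hk : 0 < k) (hC : Carleson P₀ α A) (hA0 : A ≠ 0) (hAt : A ≠ ⊤)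
    (hfin : ∀ i, ∫⁻ x in P₀.toSet, f i x < ⊤) {P : DyadicCube d} (hP : P.In P₀) :
    1 / 2 * P.vol ≤ volume (stopE α A f P) := by
  have hU : volume (⋃ Q : {Q : DyadicCube d // MaxBad α A f P Q},
      (Q : DyadicCube d).toSet) ≤ P.vol / 2 :=
    le_trans (measure_iUnion_le _) (children_tsum_vol_le hk hC hA0 hAt hfin hP)
  have h1 : 1 / 2 * P.vol = P.vol / 2 := by
    rw [one_div, div_eq_mul_inv, mul_comm]
  have h2 : P.vol / 2 = P.vol - P.vol / 2 := (ENNReal.sub_half (vol_ne_top P)).symm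
  rw [h1, h2]
  calc P.vol - P.vol / 2
      ≤ P.vol - volume (⋃ Q : {Q : DyadicCube d // MaxBad α A f P Q},
          (Q : DyadicCube d).toSet) := tsub_le_tsub_left hU _
    _ ≤ volume (stopE α A f P) := le_measure_diff

lemma stopE_disj_of_in {P P' : DyadicCube d} (hP : Stop P₀ α A f P)
    (hP' : Stop P₀ α A f P') (hne : P ≠ P') (hin : P.In P') :
    Disjoint (stopE α A f P) (stopE α A f P') := by
  rcases stop_structure (P.gen - P₀.gen).toNat P P' hP hP' hin le_rfl with h | ⟨C, hC, hPC⟩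
  · exact absurd h hne
  · rw [Set.disjoint_left]
    intro x hx hx'
    exact hx'.2 (Set.mem_iUnion.2 ⟨⟨C, hC⟩, hPC.2 hx.1⟩)

lemma stop_sparse (hk : 0 < k) (hC : Carleson P₀ α A) (hA0 : A ≠ 0) (hAt : A ≠ ⊤)
    (hfin : ∀ i, ∫⁻ x in P₀.toSet, f i x < ⊤) :
    Sparse (1 / 2) {P : DyadicCube d | Stop P₀ α A f P} := by
  refine ⟨stopE α A f, fun P hP => ?_, ?_⟩
  · refine ⟨(measurableSet_toSet P).diff
      (MeasurableSet.iUnion fun Q => measurableSet_toSet _), Set.diff_subset, ?_⟩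
    exact stopE_vol hk hC hA0 hAt hfin (Stop.in_P₀ hP)
  · intro P hP P' hP' hne
    by_cases hd : Disjoint P.toSet P'.toSet
    · exact hd.mono Set.diff_subset Set.diff_subset
    · rw [Set.not_disjoint_iff_nonempty_inter] at hd
      rcases in_or_in P P' hd with hin | hin
      · exact stopE_disj_of_in hP hP' hne hin
      · exact (stopE_disj_of_in hP' hP (Ne.symm hne) hin).symm


section PointBound

open scoped Classical

variable {k : ℕ} {P₀ : DyadicCube d} {α : DyadicCube d → ℝ≥0∞} {A : ℝ≥0∞}
  {f : Fin k → (Fin d → ℝ) → ℝ≥0∞}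

/-- The chain of relevant cubes at the point `x`. -/
def Tset (P₀ : DyadicCube d) (m : ℕ) (x : Fin d → ℝ) : Set (DyadicCube d) :=
  {Q | Q.In P₀ ∧ P₀.gen + m ≤ Q.gen ∧ x ∈ Q.toSet}

lemma chainSum_single (α : DyadicCube d → ℝ≥0∞) (R : DyadicCube d) :
    chainSum α R R = α R := by
  rw [chainSum]
  refine tsum_eq_single (⟨R, DyadicCube.In.refl R, DyadicCube.In.refl R⟩ :
    {R' : DyadicCube d // R.In R' ∧ R'.In R}) fun b hb => ?_
  exact absurd (Subtype.ext (DyadicCube.In.antisymm b.2.2 b.2.1)) hb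

lemma chainSum_le_of_piStop (hC : Carleson P₀ α A) {Q R : DyadicCube d}
    (hQ : Q.In P₀) (hR : piStop P₀ α A f Q = R) : chainSum α R Q ≤ 4 * A := by
  by_cases heq : Q = R
  · subst heq
    rw [chainSum_single]
    calc α Q ≤ A := alpha_le hC hQ
      _ ≤ 4 * A := le_mul_of_one_le_left (zero_le) (by norm_num)
  · have hnb := piStop_not_bad (α := α) (A := A) (f := f) hQ
    rw [hR] at hnb
    have hin : Q.In R := by
      rw [← hR]; exact (piStop_spec hQ).2.1
    by_contra hlt
    exact hnb ⟨hin, heq, Or.inr (lt_of_not_ge hlt)⟩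

/-- Class bound: the `α`-mass of the cubes in `T` with given minimal stopping cube `R`
(and given `G`-value `P`) is at most `4A`. -/
lemma class_bound (hC : Carleson P₀ α A) (m : ℕ) (x : Fin d → ℝ)
    (P R : DyadicCube d) :
    ∑' Q : DyadicCube d, (if Q ∈ Tset P₀ m x ∧ piStop P₀ α A f (ancestor m Q) = P ∧
        piStop P₀ α A f Q = R then α Q else 0) ≤ 4 * A := by
  classical
  rw [ENNReal.tsum_eq_iSup_sum]
  refine iSup_le fun s => ?_
  set p : DyadicCube d → Prop := fun Q => Q ∈ Tset P₀ m x ∧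
    piStop P₀ α A f (ancestor m Q) = P ∧ piStop P₀ α A f Q = R with hp
  rw [← Finset.sum_filter]
  set t := s.filter p with ht
  rcases t.eq_empty_or_nonempty with hte | htn
  · rw [hte]; simp
  obtain ⟨Qm, hQmt, hQmax⟩ := t.exists_max_image (fun Q => Q.gen) htn
  have hQm := (Finset.mem_filter.1 hQmt).2
  have hmem : ∀ Q ∈ t, Qm.In Q ∧ Q.In R := by
    intro Q hQt
    have hQ := (Finset.mem_filter.1 hQt).2
    constructor
    · exact in_of_inter (hQmax Q hQt) ⟨x, hQm.1.2.2, hQ.1.2.2⟩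
    · rw [← hQ.2.2]
      exact (piStop_spec (α := α) (A := A) (f := f) hQ.1.1).2.1
  calc ∑ Q ∈ t, α Q
      = ∑ Q ∈ t, (if Qm.In Q ∧ Q.In R then α Q else 0) := by
        refine Finset.sum_congr rfl fun Q hQt => ?_
        rw [if_pos (hmem Q hQt)]
    _ ≤ ∑' Q : DyadicCube d, (if Qm.In Q ∧ Q.In R then α Q else 0) :=
        ENNReal.sum_le_tsum t
    _ = chainSum α R Qm := by
        rw [chainSum]
        refine (Eq.trans (tsum_subtype {Q' : DyadicCube d | Qm.In Q' ∧ Q'.In R}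
          (fun Q' => α Q')) (tsum_congr fun Q' => ?_)).symm
        simp [Set.indicator_apply]
    _ ≤ 4 * A := chainSum_le_of_piStop hC hQm.1.1 hQm.2.2

/-- Counting lemma: at most `m+1` stopping classes contribute for a given `P`. -/
lemma counting_lemma (hC : Carleson P₀ α A) (m : ℕ) (x : Fin d → ℝ)
    {P : DyadicCube d} (hP : Stop P₀ α A f P) (hxP : x ∈ P.toSet) :
    ∑' Q : DyadicCube d, (if Q ∈ Tset P₀ m x ∧ piStop P₀ α A f (ancestor m Q) = P
        then α Q else 0) ≤ ((m : ℝ≥0∞) + 1) * (4 * A) := by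
  classical
  set π : DyadicCube d → DyadicCube d := piStop P₀ α A f with hπ
  set TP : Set (DyadicCube d) :=
    {Q | Q ∈ Tset P₀ m x ∧ π (ancestor m Q) = P} with hTP
  -- basic facts about members of TP
  have hanc : ∀ Q ∈ TP, (ancestor m Q).In P₀ :=
    fun Q hQ => ancestor_in m hQ.1.1 hQ.1.2.1
  have hancx : ∀ Q ∈ TP, x ∈ (ancestor m Q).toSet :=
    fun Q hQ => subset_ancestor m Q hQ.1.2.2
  have hQinP : ∀ Q ∈ TP, Q.In P := by
    intro Q hQ
    refine (in_ancestor m Q).trans ?_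
    rw [← hQ.2]
    exact (piStop_spec (α := α) (A := A) (f := f) (hanc Q hQ)).2.1
  have hπQ : ∀ Q ∈ TP, Stop P₀ α A f (π Q) ∧ Q.In (π Q) ∧ (π Q).In P := by
    intro Q hQ
    have hspec := piStop_spec (α := α) (A := A) (f := f) hQ.1.1
    exact ⟨hspec.1, hspec.2.1, hspec.2.2 P hP (hQinP Q hQ)⟩
  have hπx : ∀ Q ∈ TP, x ∈ (π Q).toSet := fun Q hQ => (hπQ Q hQ).2.1.2 hQ.1.2.2
  -- if the minimal stopping cube of Q is not P, it is strictly below every ancestor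
  have hdeep : ∀ Q ∈ TP, π Q ≠ P → ∀ Q' ∈ TP, (ancestor m Q').gen < (π Q).gen := by
    intro Q hQ hne Q' hQ'
    have hxa : x ∈ (ancestor m Q').toSet := hancx Q' hQ'
    have hxπ : x ∈ (π Q).toSet := hπx Q hQ
    have hnotin : ¬ (ancestor m Q').In (π Q) := by
      intro hin
      have hmin := (piStop_spec (α := α) (A := A) (f := f) (hanc Q' hQ')).2.2
        (π Q) (hπQ Q hQ).1 hin
      rw [← hπ] at hmin
      rw [hQ'.2] at hmin
      exact hne (DyadicCube.In.antisymm (hπQ Q hQ).2.2 hmin)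
    rcases chain_of_mem hxπ hxa with hin | hin
    · rcases lt_or_eq_of_le hin.1 with h | h
      · exact h
      · have heq := eq_of_gen_eq_of_mem hxa hxπ h
        exact absurd (by rw [heq]; exact DyadicCube.In.refl _) hnotin
    · exact absurd hin hnotin
  -- gen window for non-P values
  have hVwin : ∀ Q ∈ TP, π Q ≠ P → ∀ Q' ∈ TP, π Q' ≠ P →
      (π Q).gen < (π Q').gen + m := by
    intro Q hQ hne Q' hQ' hne'
    have h1 : (ancestor m Q).gen < (π Q').gen := hdeep Q' hQ' hne' Q hQ
    have h2 : (π Q).gen ≤ Q.gen := (hπQ Q hQ).2.1.1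
    have h3 : (ancestor m Q).gen = Q.gen - m := gen_ancestor m Q
    omega
  -- choose the minimal generation among non-P values, if any
  by_cases hV : ∃ Q ∈ TP, π Q ≠ P
  case neg =>
    -- all classes are the P class
    calc ∑' Q : DyadicCube d, (if Q ∈ Tset P₀ m x ∧ π (ancestor m Q) = P
            then α Q else 0)
        ≤ ∑' Q : DyadicCube d, (if Q ∈ Tset P₀ m x ∧ π (ancestor m Q) = P ∧
            π Q = P then α Q else 0) := by
          refine ENNReal.tsum_le_tsum fun Q => ?_
          by_cases h : Q ∈ Tset P₀ m x ∧ π (ancestor m Q) = P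
          · have hπP : π Q = P := by
              by_contra hne
              exact hV ⟨Q, ⟨h.1, h.2⟩, hne⟩
            rw [if_pos h, if_pos ⟨h.1, h.2, hπP⟩]
          · rw [if_neg h]
            exact zero_le
      _ ≤ 4 * A := class_bound hC m x P P
      _ ≤ ((m : ℝ≥0∞) + 1) * (4 * A) := le_mul_of_one_le_left (zero_le)
          (by simp [le_add_iff_nonneg_left])
  case pos =>
  obtain ⟨g0, ⟨Q0, hQ0, hQ0ne, hQ0g⟩, hg0min⟩ :
      ∃ g0 : ℤ, (∃ Q ∈ TP, π Q ≠ P ∧ (π Q).gen = g0) ∧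
        ∀ Q ∈ TP, π Q ≠ P → g0 ≤ (π Q).gen := by
    obtain ⟨Q1, hQ1, hne1⟩ := hV
    have hbdd : ∀ Q ∈ TP, π Q ≠ P → P.gen ≤ (π Q).gen := fun Q hQ _ => (hπQ Q hQ).2.2.1
    set N := {n : ℕ | ∃ Q ∈ TP, π Q ≠ P ∧ ((π Q).gen - P.gen).toNat = n} with hN
    have hNne : N.Nonempty := ⟨_, Q1, hQ1, hne1, rfl⟩
    obtain ⟨Q2, hQ2, hne2, hg2⟩ := Nat.sInf_mem hNne
    refine ⟨(π Q2).gen, ⟨Q2, hQ2, hne2, rfl⟩, ?_⟩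
    intro Q hQ hne
    have hmem : ((π Q).gen - P.gen).toNat ∈ N := ⟨Q, hQ, hne, rfl⟩
    have := Nat.sInf_le hmem
    have hb1 := hbdd Q hQ hne
    have hb2 := hbdd Q2 hQ2 hne2
    omega
  -- the partition map
  set ψ : DyadicCube d → ℕ := fun Q => if π Q = P then 0
    else ((π Q).gen - g0).toNat + 1 with hψ
  have hψmem : ∀ Q ∈ TP, ψ Q ∈ Finset.range (m + 1) := by
    intro Q hQ
    rw [Finset.mem_range]
    by_cases h : π Q = P
    · have h0 : ψ Q = 0 := by simp [hψ, h]
      omega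
    · have h1 := hg0min Q hQ h
      have h2 := hVwin Q hQ h Q0 hQ0 hQ0ne
      rw [hQ0g] at h2
      simp only [hψ, h, if_false]
      omega
  -- bound the sum class by class
  calc ∑' Q : DyadicCube d, (if Q ∈ Tset P₀ m x ∧ π (ancestor m Q) = P
          then α Q else 0)
      ≤ ∑' Q : DyadicCube d, ∑ n ∈ Finset.range (m + 1),
          (if Q ∈ TP ∧ ψ Q = n then α Q else 0) := by
        refine ENNReal.tsum_le_tsum fun Q => ?_
        by_cases h : Q ∈ Tset P₀ m x ∧ π (ancestor m Q) = P
        · rw [if_pos h]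
          have hQTP : Q ∈ TP := ⟨h.1, h.2⟩
          calc α Q = (if Q ∈ TP ∧ ψ Q = ψ Q then α Q else 0) := by
                rw [if_pos ⟨hQTP, rfl⟩]
            _ ≤ ∑ n ∈ Finset.range (m + 1), (if Q ∈ TP ∧ ψ Q = n then α Q else 0) :=
              Finset.single_le_sum
                (f := fun n => (if Q ∈ TP ∧ ψ Q = n then α Q else 0))
                (fun _ _ => zero_le) (hψmem Q hQTP)
        · rw [if_neg h]
          exact zero_le
    _ = ∑ n ∈ Finset.range (m + 1), ∑' Q : DyadicCube d,
          (if Q ∈ TP ∧ ψ Q = n then α Q else 0) :=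
        Summable.tsum_finsetSum fun i _ => ENNReal.summable
    _ ≤ ∑ n ∈ Finset.range (m + 1), 4 * A := by
        refine Finset.sum_le_sum fun n _ => ?_
        by_cases hcl : ∃ Q ∈ TP, ψ Q = n
        · obtain ⟨Qs, hQs, hQsn⟩ := hcl
          set R := π Qs with hR
          have hval : ∀ Q ∈ TP, ψ Q = n → π Q = R := by
            intro Q hQ hQn
            by_cases h : π Q = P
            · have h' : π Qs = P := by
                by_contra h'
                have : ψ Qs ≠ 0 := by simp [hψ, h']
                rw [hQsn] at this
                have : ψ Q = 0 := by simp [hψ, h]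
                omega
              rw [h, hR, h']
            · have h' : π Qs ≠ P := by
                intro h'
                have : ψ Qs = 0 := by simp [hψ, h']
                have : ψ Q ≠ 0 := by simp [hψ, h]
                omega
              have hg : (π Q).gen = (π Qs).gen := by
                have e1 : ψ Q = ((π Q).gen - g0).toNat + 1 := by simp [hψ, h]
                have e2 : ψ Qs = ((π Qs).gen - g0).toNat + 1 := by simp [hψ, h']
                have l1 := hg0min Q hQ h
                have l2 := hg0min Qs hQs h'
                omega
              exact eq_of_gen_eq_of_mem (hπx Q hQ) (hπx Qs hQs) hg
          calc ∑' Q : DyadicCube d, (if Q ∈ TP ∧ ψ Q = n then α Q else 0)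
              ≤ ∑' Q : DyadicCube d, (if Q ∈ Tset P₀ m x ∧ π (ancestor m Q) = P ∧
                  π Q = R then α Q else 0) := by
                refine ENNReal.tsum_le_tsum fun Q => ?_
                by_cases h : Q ∈ TP ∧ ψ Q = n
                · rw [if_pos h, if_pos ⟨h.1.1, h.1.2, hval Q h.1 h.2⟩]
                · rw [if_neg h]; exact zero_le
            _ ≤ 4 * A := class_bound hC m x P R
        · have : ∀ Q : DyadicCube d, (if Q ∈ TP ∧ ψ Q = n then α Q else 0) = 0 := by
            intro Q
            rw [if_neg]
            rintro ⟨h1, h2⟩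
            exact hcl ⟨Q, h1, h2⟩
          simp [this]
    _ = ((m : ℝ≥0∞) + 1) * (4 * A) := by
        rw [Finset.sum_const, Finset.card_range, nsmul_eq_mul]
        push_cast
        ring


lemma one_le_4k (hk : 0 < k) : (1 : ℝ≥0∞) ≤ 4 * k := by
  calc (1:ℝ≥0∞) = 1 * 1 := (one_mul 1).symm
    _ ≤ 4 * k := mul_le_mul' (by norm_num) (by exact_mod_cast hk)

lemma pointwise_bound (hk : 0 < k) (hC : Carleson P₀ α A) (hA0 : A ≠ 0)
    (hAt : A ≠ ⊤) (hfin : ∀ i, ∫⁻ x in P₀.toSet, f i x < ⊤) (m : ℕ)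
    (x : Fin d → ℝ) (hx : x ∈ P₀.toSet) :
    shift P₀ α m f x ≤ ((4 * k : ℝ≥0∞) ^ k * 4) * ((m : ℝ≥0∞) + 1) * A *
      sparseOp {P : DyadicCube d | Stop P₀ α A f P} f x := by
  classical
  set π : DyadicCube d → DyadicCube d := piStop P₀ α A f with hπ
  set F : DyadicCube d → ℝ≥0∞ := fun R => ∏ i, R.avg (f i) with hF
  set h : DyadicCube d → ℝ≥0∞ := fun Q =>
    if Q ∈ Tset P₀ m x then α Q * F (π (ancestor m Q)) else 0 with hh
  -- Step 1: pointwise domination of each term of the shift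
  have step1 : shift P₀ α m f x ≤ (4 * k : ℝ≥0∞) ^ k * ∑' Q : DyadicCube d, h Q := by
    rw [DyadicCube.shift, ← ENNReal.tsum_mul_left]
    calc ∑' Q : {Q : DyadicCube d // Q.In P₀ ∧ P₀.gen + m ≤ Q.gen},
            α Q.1 * (∏ i, (ancestor m Q.1).avg (f i)) * Q.1.toSet.indicator 1 x
        ≤ ∑' Q : {Q : DyadicCube d // Q.In P₀ ∧ P₀.gen + m ≤ Q.gen},
            (4 * k : ℝ≥0∞) ^ k * h Q.1 := by
          refine ENNReal.tsum_le_tsum fun Q => ?_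
          by_cases hxQ : x ∈ Q.1.toSet
          · rw [Set.indicator_of_mem hxQ, Pi.one_apply, mul_one]
            have hQT : Q.1 ∈ Tset P₀ m x := ⟨Q.2.1, Q.2.2, hxQ⟩
            rw [hh]
            simp only [if_pos hQT]
            have hanc : (ancestor m Q.1).In P₀ := ancestor_in m Q.2.1 Q.2.2
            have hkey : ∀ i, (ancestor m Q.1).avg (f i)
                ≤ (4 * k : ℝ≥0∞) * (π (ancestor m Q.1)).avg (f i) := by
              intro i
              by_cases heq : ancestor m Q.1 = π (ancestor m Q.1)
              · rw [← heq]
                exact le_mul_of_one_le_left (zero_le) (one_le_4k hk)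
              · have hnb := piStop_not_bad (α := α) (A := A) (f := f) hanc
                rw [← hπ] at hnb
                have hin : (ancestor m Q.1).In (π (ancestor m Q.1)) :=
                  (piStop_spec hanc).2.1
                by_contra hlt
                exact hnb ⟨hin, heq, Or.inl ⟨i, lt_of_not_ge hlt⟩⟩
            have hprod : (∏ i, (ancestor m Q.1).avg (f i))
                ≤ (4 * k : ℝ≥0∞) ^ k * F (π (ancestor m Q.1)) := by
              calc (∏ i, (ancestor m Q.1).avg (f i))
                  ≤ ∏ i, ((4 * k : ℝ≥0∞) * (π (ancestor m Q.1)).avg (f i)) :=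
                    Finset.prod_le_prod' fun i _ => hkey i
                _ = (4 * k : ℝ≥0∞) ^ k * F (π (ancestor m Q.1)) := by
                    rw [Finset.prod_mul_distrib, Finset.prod_const,
                      Finset.card_univ, Fintype.card_fin, hF]
            calc α Q.1 * (∏ i, (ancestor m Q.1).avg (f i))
                ≤ α Q.1 * ((4 * k : ℝ≥0∞) ^ k * F (π (ancestor m Q.1))) :=
                  mul_le_mul_right hprod _
              _ = (4 * k : ℝ≥0∞) ^ k * (α Q.1 * F (π (ancestor m Q.1))) := by ring
          · rw [Set.indicator_of_notMem hxQ, mul_zero]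
            exact zero_le
      _ ≤ ∑' Q : DyadicCube d, (4 * k : ℝ≥0∞) ^ k * h Q := by
          exact ENNReal.tsum_comp_le_tsum_of_injective Subtype.val_injective
            (fun Q => (4 * k : ℝ≥0∞) ^ k * h Q)
  -- Step 2: regroup by the minimal stopping cube of the ancestor
  set Φ : DyadicCube d → DyadicCube d → ℝ≥0∞ := fun P' Q =>
    if Stop P₀ α A f P' ∧ x ∈ P'.toSet ∧ Q ∈ Tset P₀ m x ∧ π (ancestor m Q) = P'
      then α Q * F P' else 0 with hΦ
  have step2 : ∑' Q : DyadicCube d, h Q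
      ≤ ∑' P' : DyadicCube d, ∑' Q : DyadicCube d, Φ P' Q := by
    rw [ENNReal.tsum_comm (f := fun P' Q => Φ P' Q)]
    refine ENNReal.tsum_le_tsum fun Q => ?_
    by_cases hQT : Q ∈ Tset P₀ m x
    · have hanc : (ancestor m Q).In P₀ := ancestor_in m hQT.1 hQT.2.1
      have hspec := piStop_spec (α := α) (A := A) (f := f) hanc
      rw [← hπ] at hspec
      have hxP' : x ∈ (π (ancestor m Q)).toSet :=
        hspec.2.1.2 (subset_ancestor m Q hQT.2.2)
      refine le_trans ?_ (ENNReal.le_tsum (f := fun P' => Φ P' Q) (π (ancestor m Q)))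
      simp only [hh, hΦ]
      rw [if_pos hQT, if_pos ⟨hspec.1, hxP', hQT, trivial⟩]
    · simp only [hh]
      rw [if_neg hQT]
      exact zero_le
  -- Step 3: bound the inner sums using the counting lemma
  have step3 : ∀ P' : DyadicCube d, (∑' Q : DyadicCube d, Φ P' Q)
      ≤ (if Stop P₀ α A f P' ∧ x ∈ P'.toSet
          then ((m : ℝ≥0∞) + 1) * (4 * A) * F P' else 0) := by
    intro P'
    by_cases hP' : Stop P₀ α A f P' ∧ x ∈ P'.toSet
    · rw [if_pos hP']
      have he : ∀ Q, Φ P' Q = (if Q ∈ Tset P₀ m x ∧ π (ancestor m Q) = P'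
          then α Q else 0) * F P' := by
        intro Q
        simp only [hΦ]
        by_cases hc : Q ∈ Tset P₀ m x ∧ π (ancestor m Q) = P'
        · rw [if_pos (show Stop P₀ α A f P' ∧ x ∈ P'.toSet ∧ Q ∈ Tset P₀ m x ∧
              π (ancestor m Q) = P' from ⟨hP'.1, hP'.2, hc.1, hc.2⟩), if_pos hc]
        · rw [if_neg (fun hcon => hc ⟨hcon.2.2.1, hcon.2.2.2⟩), if_neg hc, zero_mul]
      calc ∑' Q : DyadicCube d, Φ P' Q
          = (∑' Q : DyadicCube d, (if Q ∈ Tset P₀ m x ∧ π (ancestor m Q) = P'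
              then α Q else 0)) * F P' := by
            rw [← ENNReal.tsum_mul_right]
            exact tsum_congr he
        _ ≤ ((m : ℝ≥0∞) + 1) * (4 * A) * F P' :=
            mul_le_mul_left (counting_lemma hC m x hP'.1 hP'.2) _
    · rw [if_neg hP']
      have : ∀ Q, Φ P' Q = 0 := by
        intro Q
        simp only [hΦ]
        rw [if_neg (fun hcon => hP' ⟨hcon.1, hcon.2.1⟩)]
      simp [this]
  -- Step 4: compare with the sparse operator
  have step4 : ∑' P' : DyadicCube d, (if Stop P₀ α A f P' ∧ x ∈ P'.toSet
      then ((m : ℝ≥0∞) + 1) * (4 * A) * F P' else 0)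
      ≤ ((m : ℝ≥0∞) + 1) * (4 * A) *
        sparseOp {P : DyadicCube d | Stop P₀ α A f P} f x := by
    have hsp : sparseOp {P : DyadicCube d | Stop P₀ α A f P} f x
        = ∑' P' : DyadicCube d, Set.indicator {P : DyadicCube d | Stop P₀ α A f P}
            (fun P => (∏ i, P.avg (f i)) * P.toSet.indicator 1 x) P' :=
      tsum_subtype {P : DyadicCube d | Stop P₀ α A f P}
        (fun P => (∏ i, P.avg (f i)) * P.toSet.indicator 1 x)
    calc ∑' P' : DyadicCube d, (if Stop P₀ α A f P' ∧ x ∈ P'.toSet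
            then ((m : ℝ≥0∞) + 1) * (4 * A) * F P' else 0)
        ≤ ∑' P' : DyadicCube d, ((m : ℝ≥0∞) + 1) * (4 * A) *
            Set.indicator {P : DyadicCube d | Stop P₀ α A f P}
              (fun P => (∏ i, P.avg (f i)) * P.toSet.indicator 1 x) P' := by
          refine ENNReal.tsum_le_tsum fun P' => ?_
          by_cases hP' : Stop P₀ α A f P' ∧ x ∈ P'.toSet
          · rw [if_pos hP',
              Set.indicator_of_mem
                (show P' ∈ {P : DyadicCube d | Stop P₀ α A f P} from hP'.1),
              Set.indicator_of_mem hP'.2, Pi.one_apply, mul_one]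
          · rw [if_neg hP']
            exact zero_le
      _ = ((m : ℝ≥0∞) + 1) * (4 * A) * ∑' P' : DyadicCube d,
            Set.indicator {P : DyadicCube d | Stop P₀ α A f P}
              (fun P => (∏ i, P.avg (f i)) * P.toSet.indicator 1 x) P' :=
          ENNReal.tsum_mul_left
      _ = ((m : ℝ≥0∞) + 1) * (4 * A) *
            sparseOp {P : DyadicCube d | Stop P₀ α A f P} f x := by rw [hsp]
  -- assemble
  calc shift P₀ α m f x
      ≤ (4 * k : ℝ≥0∞) ^ k * ∑' Q : DyadicCube d, h Q := step1
    _ ≤ (4 * k : ℝ≥0∞) ^ k * ∑' P' : DyadicCube d, ∑' Q : DyadicCube d, Φ P' Q :=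
        mul_le_mul_right step2 _
    _ ≤ (4 * k : ℝ≥0∞) ^ k * ∑' P' : DyadicCube d,
        (if Stop P₀ α A f P' ∧ x ∈ P'.toSet
          then ((m : ℝ≥0∞) + 1) * (4 * A) * F P' else 0) :=
        mul_le_mul_right (ENNReal.tsum_le_tsum step3) _
    _ ≤ (4 * k : ℝ≥0∞) ^ k * (((m : ℝ≥0∞) + 1) * (4 * A) *
        sparseOp {P : DyadicCube d | Stop P₀ α A f P} f x) :=
        mul_le_mul_right step4 _
    _ = ((4 * k : ℝ≥0∞) ^ k * 4) * ((m : ℝ≥0∞) + 1) * A *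
        sparseOp {P : DyadicCube d | Stop P₀ α A f P} f x := by ring

end PointBound

end Sparsity

end SparseProof

/-- Theorem A: there is `C₂` depending only on `k` and `d` such that for
every Carleson sequence `α` on `𝒟(P₀)`, every complexity `m ≥ 0` and all nonnegative
integrable `f₁,…,f_k`, there is a sparse `𝒮 ⊆ 𝒟(P₀)` with
`𝒜^m_{P₀,α} f⃗(x) ≤ C₂ (m+1) ‖α‖ Σ_{Q∈𝒮} (∏⟨f_i⟩_Q) 1_Q(x)` on `P₀`. -/
theorem theoremA {d k : ℕ} (hk : 0 < k) :
    ∃ C₂ : ℝ≥0∞, 0 < C₂ ∧ C₂ < ⊤ ∧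
      ∀ (P₀ : DyadicCube d) (α : DyadicCube d → ℝ≥0∞) (A : ℝ≥0∞), Carleson P₀ α A →
        ∀ (m : ℕ) (f : Fin k → (Fin d → ℝ) → ℝ≥0∞), (∀ i, Measurable (f i)) →
          (∀ i, ∫⁻ x in P₀.toSet, f i x < ⊤) →
          ∃ S : Set (DyadicCube d), (∀ Q ∈ S, Q.In P₀) ∧ Sparse (1 / 2) S ∧
            ∀ x ∈ P₀.toSet,
              shift P₀ α m f x ≤ C₂ * ((m : ℝ≥0∞) + 1) * A * sparseOp S f x := by
  classical
  refine ⟨(4 * k : ℝ≥0∞) ^ k * 4, ?_, ?_, ?_⟩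
  · have h1 : ((4 * k : ℝ≥0∞)) ≠ 0 := by simp [hk.ne']
    exact ENNReal.mul_pos (pow_ne_zero k h1) (by norm_num)
  · have h2 : ((4 * k : ℝ≥0∞)) ≠ ⊤ := by
      simp [ENNReal.mul_ne_top, ENNReal.natCast_ne_top]
    exact ENNReal.mul_lt_top (ENNReal.pow_ne_top h2).lt_top (by norm_num)
  intro P₀ α A hC m f hmeas hfin
  have hsingle_in : ∀ Q ∈ ({P₀} : Set (DyadicCube d)), Q.In P₀ := by
    intro Q hQ
    rw [Set.mem_singleton_iff] at hQ
    rw [hQ]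
    exact DyadicCube.In.refl P₀
  have hsingle_sparse : Sparse (1 / 2) ({P₀} : Set (DyadicCube d)) := by
    refine ⟨fun Q => Q.toSet, fun Q _ => ⟨SparseProof.measurableSet_toSet Q,
      subset_rfl, ?_⟩, Set.pairwise_singleton _ _⟩
    have h1 : (1 : ℝ≥0∞) / 2 * Q.vol = Q.vol / 2 := by
      rw [one_div, div_eq_mul_inv, mul_comm]
    rw [h1]
    exact ENNReal.half_le_self
  by_cases htriv : (∃ i, ∫⁻ x in P₀.toSet, f i x = 0) ∨ A = 0
  · refine ⟨{P₀}, hsingle_in, hsingle_sparse, ?_⟩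
    intro x hx
    have hz : shift P₀ α m f x = 0 := by
      rw [DyadicCube.shift]
      refine Eq.trans (tsum_congr fun Q => ?_) tsum_zero
      rcases htriv with ⟨i, hi⟩ | hA0
      · have hanc : (ancestor m Q.1).In P₀ := SparseProof.ancestor_in m Q.2.1 Q.2.2
        have havg : (ancestor m Q.1).avg (f i) = 0 := by
          rw [SparseProof.avg_eq_zero_iff]
          exact le_antisymm ((lintegral_mono_set hanc.2).trans hi.le) (zero_le)
        rw [Finset.prod_eq_zero (Finset.mem_univ i) havg, mul_zero, zero_mul]
      · have hα : α Q.1 = 0 :=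
          le_antisymm ((SparseProof.alpha_le hC Q.2.1).trans hA0.le) (zero_le)
        rw [hα, zero_mul, zero_mul]
    rw [hz]
    exact zero_le
  · push_neg at htriv
    obtain ⟨hnz, hA0⟩ := htriv
    by_cases hAt : A = ⊤
    · refine ⟨{P₀}, hsingle_in, hsingle_sparse, ?_⟩
      intro x hx
      have hF0 : (∏ i, P₀.avg (f i)) ≠ 0 := by
        rw [Finset.prod_ne_zero_iff]
        intro i _
        rw [Ne, SparseProof.avg_eq_zero_iff]
        exact hnz i
      have hsp : (∏ i, P₀.avg (f i)) ≤ sparseOp ({P₀} : Set (DyadicCube d)) f x := by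
        have hle := ENNReal.le_tsum (f := fun Q : ({P₀} : Set (DyadicCube d)) =>
          (∏ i, (Q : DyadicCube d).avg (f i)) *
            (Q : DyadicCube d).toSet.indicator 1 x) ⟨P₀, rfl⟩
        rw [DyadicCube.sparseOp]
        exact le_trans (by simp [Set.indicator_of_mem hx]) hle
      have hsp0 : sparseOp ({P₀} : Set (DyadicCube d)) f x ≠ 0 :=
        fun h0 => hF0 (le_antisymm (h0 ▸ hsp) (zero_le))
      have hc0 : (4 * k : ℝ≥0∞) ^ k * 4 * ((m : ℝ≥0∞) + 1) ≠ 0 := by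
        refine mul_ne_zero (mul_ne_zero (pow_ne_zero k ?_) (by norm_num)) ?_
        · simp [hk.ne']
        · exact fun h => by simpa using h
      have hRHS : (4 * k : ℝ≥0∞) ^ k * 4 * ((m : ℝ≥0∞) + 1) * A *
          sparseOp ({P₀} : Set (DyadicCube d)) f x = ⊤ := by
        rw [hAt, ENNReal.mul_top hc0, ENNReal.top_mul hsp0]
      rw [hRHS]
      exact le_top
    · refine ⟨{P : DyadicCube d | SparseProof.Stop P₀ α A f P},
        fun Q hQ => SparseProof.Stop.in_P₀ hQ,
        SparseProof.stop_sparse hk hC hA0 hAt hfin, ?_⟩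
      intro x hx
      exact SparseProof.pointwise_bound hk hC hA0 hAt hfin m x hx
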